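/- Let 𝔽 be a finite field with exactly n elements, identified with [n], and let Inv = (P, Q, D) be an s-advice, q-query non-adaptive inverter with a d-depth affine decision tree decoder, where 1 ≤ q ≤ n/16. Then for every τ ∈ [0, 1], every δ ∈ (0, 1], and every natural number m ≤ n·log₂(n/q) / (4(d+1)·log₂ n): Pr_{f←F_n}[ Pr_{x←[n]}[Inv(f(x); f) ∈ f^{−1}(f(x))] ≥ τ ] ≤ α_{τ,δ} + 2^s · δ^{−m} · ∏_{j=1}^{m} ((d+1)j/n + max{(q/n)^{1/4}, 2(d+1)j·log₂ n / (n·log₂(n/q))}), where α_{τ,δ} := Pr_{f←F_n}[∃ X ⊆ [n] with |X| ≥ τn and |f(X)| ≤ δn]. -/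

import Mathlib

open Finset
set_option linter.unusedSectionVars false

namespace Stmt13Aux

variable {𝔽 : Type} [Field 𝔽] [Fintype 𝔽] [DecidableEq 𝔽]

/-- standard inner product of two vectors in `𝔽^𝔽` -/
def ip (v f : 𝔽 → 𝔽) : 𝔽 := ∑ x, v x * f x

lemma ip_add_smul (v f h : 𝔽 → 𝔽) (c : 𝔽) : ip v (f + c • h) = ip v f + c * ip v h := by
  simp [ip, mul_add, Finset.sum_add_distrib, Finset.mul_sum, mul_left_comm]

lemma ip_zero_left (f : 𝔽 → 𝔽) : ip (0 : 𝔽 → 𝔽) f = 0 := by simp [ip]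

lemma ip_add_left (v w f : 𝔽 → 𝔽) : ip (v + w) f = ip v f + ip w f := by
  simp [ip, add_mul, Finset.sum_add_distrib]

lemma ip_smul_left (c : 𝔽) (v f : 𝔽 → 𝔽) : ip (c • v) f = c * ip v f := by
  simp [ip, Finset.mul_sum, mul_assoc]

/-- coordinate vector -/
def e (x : 𝔽) : 𝔽 → 𝔽 := Pi.single x 1

lemma ip_e (x : 𝔽) (f : 𝔽 → 𝔽) : ip (e x) f = f x := by
  simp [ip, e, Pi.single_apply, ite_mul]

/-- solution set of a list of affine constraints -/
def sol (S : List ((𝔽 → 𝔽) × 𝔽)) : Finset (𝔽 → 𝔽) :=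
  univ.filter fun f => ∀ p ∈ S, ip p.1 f = p.2

lemma mem_sol {S : List ((𝔽 → 𝔽) × 𝔽)} {f : 𝔽 → 𝔽} :
    f ∈ sol S ↔ ∀ p ∈ S, ip p.1 f = p.2 := by simp [sol]

lemma sol_concat (S : List ((𝔽 → 𝔽) × 𝔽)) (v : 𝔽 → 𝔽) (γ : 𝔽) :
    sol (S ++ [(v, γ)]) = (sol S).filter fun f => ip v f = γ := by
  ext f
  simp only [sol, mem_filter, mem_univ, true_and, List.mem_append, List.mem_singleton]
  constructor
  · intro h
    exact ⟨fun p hp => h p (Or.inl hp), h (v, γ) (Or.inr rfl)⟩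
  · rintro ⟨h1, h2⟩ p (hp | rfl)
    · exact h1 p hp
    · exact h2

/-- span of the constraint vectors -/
def spanS (S : List ((𝔽 → 𝔽) × 𝔽)) : Submodule 𝔽 (𝔽 → 𝔽) :=
  Submodule.span 𝔽 {v | v ∈ S.map Prod.fst}

open Classical in
/-- determined coordinates -/
noncomputable def XS (S : List ((𝔽 → 𝔽) × 𝔽)) : Finset 𝔽 :=
  univ.filter fun x => e x ∈ spanS S

lemma mem_XS {S : List ((𝔽 → 𝔽) × 𝔽)} {x : 𝔽} : x ∈ XS S ↔ e x ∈ spanS S := by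
  simp [XS]

lemma const_on_sol {S : List ((𝔽 → 𝔽) × 𝔽)} {v : 𝔽 → 𝔽} (hv : v ∈ spanS S)
    {f g : 𝔽 → 𝔽} (hf : f ∈ sol S) (hg : g ∈ sol S) : ip v f = ip v g := by
  induction hv using Submodule.span_induction with
  | mem w hw =>
    obtain ⟨p, hp, rfl⟩ := List.mem_map.1 hw
    rw [mem_sol.1 hf p hp, mem_sol.1 hg p hp]
  | zero => rw [ip_zero_left, ip_zero_left]
  | add w u _ _ hw hu => rw [ip_add_left, ip_add_left, hw, hu]
  | smul c w _ hw => rw [ip_smul_left, ip_smul_left, hw]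

lemma exists_dual {S : List ((𝔽 → 𝔽) × 𝔽)} {v : 𝔽 → 𝔽} (hv : v ∉ spanS S) :
    ∃ h : 𝔽 → 𝔽, (∀ w ∈ spanS S, ip w h = 0) ∧ ip v h = 1 := by
  obtain ⟨φ, hφ1, hφ2⟩ := Submodule.exists_dual_map_eq_bot_of_notMem hv inferInstance
  have key : ∀ w : 𝔽 → 𝔽, ip w (fun x => φ (e x)) = φ w := by
    intro w
    have hw : w = ∑ x : 𝔽, w x • e x := by
      have := (Pi.basisFun 𝔽 𝔽).sum_repr w
      simpa [e] using this.symm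
    conv_rhs => rw [hw]
    rw [map_sum]
    simp [ip, smul_eq_mul]
  have hker : ∀ w ∈ spanS S, φ w = 0 := by
    intro w hw
    have : φ w ∈ (spanS S).map φ := Submodule.mem_map_of_mem hw
    rwa [hφ2, Submodule.mem_bot] at this
  refine ⟨(φ v)⁻¹ • (fun x => φ (e x)), ?_, ?_⟩
  · intro w hw
    have h1 : ip w ((φ v)⁻¹ • fun x => φ (e x)) = (φ v)⁻¹ * ip w (fun x => φ (e x)) := by
      have := ip_add_smul w 0 (fun x => φ (e x)) (φ v)⁻¹
      simpa [ip] using this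
    rw [h1, key, hker w hw, mul_zero]
  · have h1 : ip v ((φ v)⁻¹ • fun x => φ (e x)) = (φ v)⁻¹ * ip v (fun x => φ (e x)) := by
      have := ip_add_smul v 0 (fun x => φ (e x)) (φ v)⁻¹
      simpa [ip] using this
    rw [h1, key, inv_mul_cancel₀ hφ1]

lemma XS_card_le (S : List ((𝔽 → 𝔽) × 𝔽)) : (XS S).card ≤ S.length := by
  classical
  have hind : LinearIndependent 𝔽 (fun x : (XS S : Finset 𝔽) => e (x : 𝔽)) := by
    have hb : ⇑(Pi.basisFun 𝔽 𝔽) = fun x : 𝔽 => e x := funext fun x => by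
      simp [e]
    have := (Pi.basisFun 𝔽 𝔽).linearIndependent
    rw [hb] at this
    exact this.comp _ Subtype.val_injective
  have hmem : ∀ x : (XS S : Finset 𝔽), e (x : 𝔽) ∈ spanS S := fun x => mem_XS.1 x.2
  have hind' : LinearIndependent 𝔽 (fun x : (XS S : Finset 𝔽) =>
      (⟨e (x : 𝔽), hmem x⟩ : spanS S)) := by
    apply LinearIndependent.of_comp (spanS S).subtype
    exact hind
  have h1 : Fintype.card (XS S : Finset 𝔽) ≤ Module.finrank 𝔽 (spanS S) :=
    hind'.fintype_card_le_finrank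
  have h2 : Module.finrank 𝔽 (spanS S) ≤ S.length := by
    have hset : {v : 𝔽 → 𝔽 | v ∈ S.map Prod.fst} = ↑(S.map Prod.fst).toFinset := by
      ext w; simp
    have h3 : Module.finrank 𝔽 (spanS S) ≤ (S.map Prod.fst).toFinset.card := by
      rw [spanS, hset]
      exact finrank_span_finset_le_card _
    calc Module.finrank 𝔽 (spanS S) ≤ (S.map Prod.fst).toFinset.card := h3
      _ ≤ (S.map Prod.fst).length := (S.map Prod.fst).toFinset_card_le
      _ = S.length := List.length_map _
  simpa [Fintype.card_coe] using h1.trans h2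

lemma sol_card_eq_sum_fibers (S : List ((𝔽 → 𝔽) × 𝔽)) (v : 𝔽 → 𝔽) :
    (sol S).card = ∑ γ : 𝔽, (sol (S ++ [(v, γ)])).card := by
  rw [Finset.card_eq_sum_card_fiberwise (f := fun f => ip v f) (t := univ)
    (fun x _ => mem_univ _)]
  exact Finset.sum_congr rfl fun γ _ => by rw [sol_concat]

lemma filter_card_eq_sum_fibers (S : List ((𝔽 → 𝔽) × 𝔽)) (v : 𝔽 → 𝔽)
    (P : (𝔽 → 𝔽) → Prop) [DecidablePred P] :
    ((sol S).filter P).card = ∑ γ : 𝔽, ((sol (S ++ [(v, γ)])).filter P).card := by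
  rw [Finset.card_eq_sum_card_fiberwise (f := fun f => ip v f) (t := univ)
    (fun x _ => mem_univ _)]
  refine Finset.sum_congr rfl fun γ _ => ?_
  rw [sol_concat, Finset.filter_comm]

lemma equi2 {n : ℕ} (hn : Fintype.card 𝔽 = n) {S : List ((𝔽 → 𝔽) × 𝔽)} {v : 𝔽 → 𝔽}
    (hv : v ∉ spanS S) (γ : 𝔽) :
    n * (sol (S ++ [(v, γ)])).card = (sol S).card := by
  obtain ⟨h, h0, h1⟩ := exists_dual hv
  have hshift : ∀ (γ₁ γ₂ : 𝔽), ∀ f ∈ sol (S ++ [(v, γ₁)]),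
      f + (γ₂ - γ₁) • h ∈ sol (S ++ [(v, γ₂)]) := by
    intro γ₁ γ₂ f hf
    rw [sol_concat, mem_filter] at hf ⊢
    obtain ⟨hf1, hf2⟩ := hf
    refine ⟨?_, ?_⟩
    · rw [mem_sol] at hf1 ⊢
      intro p hp
      rw [ip_add_smul, hf1 p hp,
        h0 p.1 (Submodule.subset_span (List.mem_map_of_mem (f := Prod.fst) hp)), mul_zero, add_zero]
    · rw [ip_add_smul, hf2, h1, mul_one]
      ring
  have hbij : ∀ γ' : 𝔽, (sol (S ++ [(v, γ')])).card = (sol (S ++ [(v, γ)])).card := by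
    intro γ'
    apply Finset.card_bij' (fun f _ => f + (γ - γ') • h) (fun f _ => f + (γ' - γ) • h)
      (fun f hf => hshift γ' γ f hf) (fun f hf => hshift γ γ' f hf)
    · intro f _
      rw [add_assoc, ← add_smul]
      simp
    · intro f _
      rw [add_assoc, ← add_smul]
      simp
  rw [sol_card_eq_sum_fibers S v, Finset.sum_congr rfl (fun γ' _ => hbij γ'),
    Finset.sum_const, card_univ, hn, smul_eq_mul]

open Classical in
/-- whether some determined coordinate has determined value `y` -/
noncomputable def cind (S : List ((𝔽 → 𝔽) × 𝔽)) (y : 𝔽) : ℕ :=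
  if ∃ x ∈ XS S, ∀ f ∈ sol S, f x = y then 1 else 0

section Tree

variable {n d : ℕ}

lemma main_ind (hn : Fintype.card 𝔽 = n) (y : 𝔽)
    (α : Fin d → (Fin d → 𝔽) → (𝔽 → 𝔽)) (oo : (Fin d → 𝔽) → 𝔽)
    (Sc : (𝔽 → 𝔽) → Prop) [DecidablePred Sc]
    (hpre : ∀ (k : Fin d) (gs gs' : Fin d → 𝔽),
      (∀ j : Fin d, (j : ℕ) < (k : ℕ) → gs j = gs' j) → α k gs = α k gs')
    (hfix : ∀ f : 𝔽 → 𝔽, ∃ g : Fin d → 𝔽,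
      (∀ k, g k = ip (α k g) f) ∧ (Sc f ↔ f (oo g) = y)) :
    ∀ (t k : ℕ), k + t = d → ∀ (S : List ((𝔽 → 𝔽) × 𝔽)) (gs : Fin d → 𝔽),
      (∀ f ∈ sol S, ∀ g : Fin d → 𝔽, (∀ k', g k' = ip (α k' g) f) →
        ∀ i : Fin d, (i : ℕ) < k → g i = gs i) →
      n * ((sol S).filter Sc).card + (sol S).card * (XS S).card
        ≤ (sol S).card * (n * cind S y + 1 + S.length + t) := by
  intro t
  induction t with
  | zero =>
    intro k hk S gs hcompat
    rcases (sol S).eq_empty_or_nonempty with hA | ⟨f₀, hf₀⟩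
    · simp [hA]
    have hR : (XS S).card ≤ S.length := XS_card_le S
    have hfilter : (sol S).filter Sc = (sol S).filter (fun f => f (oo gs) = y) := by
      apply Finset.filter_congr
      intro f hf
      obtain ⟨g, hg1, hg2⟩ := hfix f
      have hggs : g = gs := funext fun i => hcompat f hf g hg1 i (by omega)
      rw [← hggs]
      exact hg2
    by_cases hx : e (oo gs) ∈ spanS S
    · have hconst : ∀ f ∈ sol S, f (oo gs) = f₀ (oo gs) := by
        intro f hf
        have := const_on_sol hx hf hf₀
        rwa [ip_e, ip_e] at this
      by_cases hy : f₀ (oo gs) = y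
      · have hc : cind S y = 1 := by
          simp only [cind]
          rw [if_pos ⟨oo gs, mem_XS.2 hx, fun f hf => (hconst f hf).trans hy⟩]
        rw [hc, hfilter]
        have h1 : ((sol S).filter fun f => f (oo gs) = y).card ≤ (sol S).card :=
          card_le_card (filter_subset _ _)
        calc n * ((sol S).filter fun f => f (oo gs) = y).card + (sol S).card * (XS S).card
            ≤ n * (sol S).card + (sol S).card * S.length :=
              Nat.add_le_add (Nat.mul_le_mul_left n h1) (Nat.mul_le_mul_left _ hR)
          _ = (sol S).card * (n + S.length) := by ring
          _ ≤ (sol S).card * (n * 1 + 1 + S.length + 0) := by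
              apply Nat.mul_le_mul_left (sol S).card
              clear hc hfilter h1 hconst hcompat hfix hpre
              omega
      · have hempty : (sol S).filter (fun f => f (oo gs) = y) = ∅ := by
          apply Finset.filter_eq_empty_iff.2
          intro f hf h
          exact hy ((hconst f hf) ▸ h)
        rw [hfilter, hempty]
        simp only [card_empty, Nat.mul_zero, Nat.zero_add]
        calc (sol S).card * (XS S).card ≤ (sol S).card * S.length := Nat.mul_le_mul_left _ hR
          _ ≤ (sol S).card * (n * cind S y + 1 + S.length + 0) :=
              Nat.mul_le_mul_left _ (by generalize n * cind S y = w; omega)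
    · have hfe : (sol S).filter (fun f => f (oo gs) = y) = sol (S ++ [(e (oo gs), y)]) := by
        rw [sol_concat]
        apply Finset.filter_congr
        intro f _
        rw [ip_e]
      rw [hfilter, hfe, equi2 hn hx y]
      have heq : (sol S).card + (sol S).card * (XS S).card
          = (sol S).card * (1 + (XS S).card) := by ring
      rw [heq]
      apply Nat.mul_le_mul_left
      generalize n * cind S y = w
      omega
  | succ t ih =>
    intro k hk S gs hcompat
    rcases (sol S).eq_empty_or_nonempty with hA | ⟨f₀, hf₀⟩
    · simp [hA]
    have hR : (XS S).card ≤ S.length := XS_card_le S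
    have hkd : k < d := by omega
    by_cases hc : ∃ x ∈ XS S, ∀ f ∈ sol S, f x = y
    · have hc1 : cind S y = 1 := by simp only [cind]; rw [if_pos hc]
      rw [hc1]
      have h1 : ((sol S).filter Sc).card ≤ (sol S).card := card_le_card (filter_subset _ _)
      calc n * ((sol S).filter Sc).card + (sol S).card * (XS S).card
          ≤ n * (sol S).card + (sol S).card * S.length :=
            Nat.add_le_add (Nat.mul_le_mul_left n h1) (Nat.mul_le_mul_left _ hR)
        _ = (sol S).card * (n + S.length) := by ring
        _ ≤ (sol S).card * (n * 1 + 1 + S.length + (t + 1)) :=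
            Nat.mul_le_mul_left (sol S).card (by omega : n + S.length ≤ n * 1 + 1 + S.length + (t+1))
    · have hc0 : cind S y = 0 := by simp only [cind]; rw [if_neg hc]
      set kF : Fin d := ⟨k, hkd⟩ with hkF
      set v : 𝔽 → 𝔽 := α kF gs with hv_def
      have hαeq : ∀ f ∈ sol S, ∀ g : Fin d → 𝔽, (∀ k', g k' = ip (α k' g) f) →
          α kF g = v := by
        intro f hf g hg
        exact hpre kF g gs (fun j hj => hcompat f hf g hg j hj)
      by_cases hv : v ∈ spanS S
      · -- determined step
        have hcompat' : ∀ f ∈ sol S, ∀ g : Fin d → 𝔽, (∀ k', g k' = ip (α k' g) f) →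
            ∀ i : Fin d, (i : ℕ) < k + 1 → g i = Function.update gs kF (ip v f₀) i := by
          intro f hf g hg i hi
          rcases Nat.lt_or_ge (i : ℕ) k with h | h
          · rw [Function.update_of_ne (Fin.ne_of_val_ne (by simp only [hkF]; omega))]
            exact hcompat f hf g hg i h
          · have hik : i = kF := Fin.ext (by simp only [hkF]; omega)
            rw [hik, Function.update_self]
            calc g kF = ip (α kF g) f := hg kF
              _ = ip v f := by rw [hαeq f hf g hg]
              _ = ip v f₀ := const_on_sol hv hf hf₀
        have hIH := ih (k + 1) (by omega) S (Function.update gs kF (ip v f₀)) hcompat'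
        exact hIH.trans (Nat.mul_le_mul_left _ (by omega))
      · -- fresh step
        have hSγ : ∀ γ : 𝔽, sol (S ++ [(v, γ)]) = (sol S).filter fun f => ip v f = γ :=
          fun γ => sol_concat S v γ
        have hcard : ∀ γ : 𝔽, n * (sol (S ++ [(v, γ)])).card = (sol S).card :=
          fun γ => equi2 hn hv γ
        have hApos : 0 < (sol S).card := card_pos.2 ⟨f₀, hf₀⟩
        have hne : ∀ γ : 𝔽, (sol (S ++ [(v, γ)])).Nonempty := by
          intro γ
          rw [← Finset.card_pos]
          rcases Nat.eq_zero_or_pos (sol (S ++ [(v, γ)])).card with h | h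
          · exfalso
            have := hcard γ
            rw [h, Nat.mul_zero] at this
            omega
          · exact h
        have hsolsub : ∀ γ : 𝔽, ∀ f ∈ sol (S ++ [(v, γ)]), f ∈ sol S := by
          intro γ f hf
          rw [hSγ, mem_filter] at hf
          exact hf.1
        have hipv : ∀ γ : 𝔽, ∀ f ∈ sol (S ++ [(v, γ)]), ip v f = γ := by
          intro γ f hf
          rw [hSγ, mem_filter] at hf
          exact hf.2
        have hIH : ∀ γ : 𝔽,
            n * ((sol (S ++ [(v, γ)])).filter Sc).card
              + (sol (S ++ [(v, γ)])).card * (XS (S ++ [(v, γ)])).card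
            ≤ (sol (S ++ [(v, γ)])).card
              * (n * cind (S ++ [(v, γ)]) y + 1 + (S ++ [(v, γ)]).length + t) := by
          intro γ
          apply ih (k + 1) (by omega) _ (Function.update gs kF γ)
          intro f hf g hg i hi
          have hfS : f ∈ sol S := hsolsub γ f hf
          rcases Nat.lt_or_ge (i : ℕ) k with h | h
          · rw [Function.update_of_ne (Fin.ne_of_val_ne (by simp only [hkF]; omega))]
            exact hcompat f hfS g hg i h
          · have hik : i = kF := Fin.ext (by simp only [hkF]; omega)
            rw [hik, Function.update_self]
            calc g kF = ip (α kF g) f := hg kF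
              _ = ip v f := by rw [hαeq f hfS g hg]
              _ = γ := hipv γ f hf
        have hspan' : ∀ γ γ' : 𝔽, spanS (S ++ [(v, γ)]) = spanS (S ++ [(v, γ')]) := by
          intro γ γ'
          unfold spanS
          congr 1
          ext w
          simp
        have hXS' : ∀ γ : 𝔽, XS (S ++ [(v, γ)]) = XS (S ++ [(v, (0 : 𝔽))]) := by
          intro γ
          ext x
          rw [mem_XS, mem_XS, hspan' γ 0]
        have hsub : XS S ⊆ XS (S ++ [(v, (0 : 𝔽))]) := by
          intro x hx
          rw [mem_XS] at hx ⊢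
          refine Submodule.span_mono ?_ hx
          intro w hw
          simp only [Set.mem_setOf_eq, List.map_append, List.mem_append] at hw ⊢
          exact Or.inl hw
        have hpart : ((sol S).filter Sc).card
            = ∑ γ : 𝔽, ((sol (S ++ [(v, γ)])).filter Sc).card :=
          filter_card_eq_sum_fibers S v Sc
        have hpartA : (sol S).card = ∑ γ : 𝔽, (sol (S ++ [(v, γ)])).card :=
          sol_card_eq_sum_fibers S v
        -- each bad γ yields a fresh determined coordinate with value y
        have hwit : ∀ γ : 𝔽, cind (S ++ [(v, γ)]) y = 1 →
            ∃ x, (x ∈ XS (S ++ [(v, (0 : 𝔽))]) \ XS S)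
              ∧ ∀ f ∈ sol (S ++ [(v, γ)]), f x = y := by
          intro γ h1
          simp only [cind] at h1
          by_cases hex : ∃ x ∈ XS (S ++ [(v, γ)]), ∀ f ∈ sol (S ++ [(v, γ)]), f x = y
          · obtain ⟨x, hx1, hx2⟩ := hex
            refine ⟨x, Finset.mem_sdiff.2 ⟨by rw [← hXS' γ]; exact hx1, ?_⟩, hx2⟩
            intro hxS
            apply hc
            refine ⟨x, hxS, ?_⟩
            intro f hf
            obtain ⟨f', hf'⟩ := hne γ
            have h3 : f x = f' x := by
              have := const_on_sol (mem_XS.1 hxS) hf (hsolsub γ f' hf')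
              rwa [ip_e, ip_e] at this
            rw [h3]
            exact hx2 f' hf'
          · rw [if_neg hex] at h1
            omega
        have hcards : (∑ γ : 𝔽, cind (S ++ [(v, γ)]) y)
            ≤ (XS (S ++ [(v, (0 : 𝔽))]) \ XS S).card := by
          classical
          have hsumf : (∑ γ : 𝔽, cind (S ++ [(v, γ)]) y)
              = (univ.filter fun γ : 𝔽 => cind (S ++ [(v, γ)]) y = 1).card := by
            rw [Finset.card_filter]
            apply Finset.sum_congr rfl
            intro γ _
            have h01 : cind (S ++ [(v, γ)]) y = 0 ∨ cind (S ++ [(v, γ)]) y = 1 := by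
              simp only [cind]
              split <;> simp
            rcases h01 with h | h
            · rw [h, if_neg (by omega)]
            · rw [h, if_pos rfl]
          rw [hsumf]
          have hwit' : ∀ γ : 𝔽, ∃ x : 𝔽, cind (S ++ [(v, γ)]) y = 1 →
              ((x ∈ XS (S ++ [(v, (0 : 𝔽))]) \ XS S)
                ∧ ∀ f ∈ sol (S ++ [(v, γ)]), f x = y) := by
            intro γ
            by_cases h : cind (S ++ [(v, γ)]) y = 1
            · obtain ⟨x, hx1, hx2⟩ := hwit γ h
              exact ⟨x, fun _ => ⟨hx1, hx2⟩⟩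
            · exact ⟨0, fun hcon => absurd hcon h⟩
          apply Finset.card_le_card_of_injOn (fun γ => (hwit' γ).choose)
          · intro γ hγ
            rw [mem_coe, mem_filter] at hγ
            exact ((hwit' γ).choose_spec hγ.2).1
          · intro γ1 h1 γ2 h2 heq
            simp only [Finset.coe_filter, Set.mem_setOf_eq, mem_univ, true_and] at h1 h2
            have heq' : (hwit' γ1).choose = (hwit' γ2).choose := heq
            have e1 := (hwit' γ1).choose_spec h1
            have e2 := (hwit' γ2).choose_spec h2
            obtain ⟨x, hxeq⟩ : ∃ x, x = (hwit' γ1).choose := ⟨_, rfl⟩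
            rw [← hxeq] at e1
            rw [← (hxeq.trans heq')] at e2
            obtain ⟨f1, hf1⟩ := hne γ1
            obtain ⟨f2, hf2⟩ := hne γ2
            have hy1 : f1 x = y := e1.2 f1 hf1
            have hy2 : f2 x = y := e2.2 f2 hf2
            have hxXS := Finset.mem_sdiff.1 e1.1
            have hxmem : e x ∈ spanS (S ++ [(v, γ1)]) := by
              rw [hspan' γ1 0]
              exact mem_XS.1 hxXS.1
            have hxnot : e x ∉ spanS S := fun hcon => hxXS.2 (mem_XS.2 hcon)
            have hins : spanS (S ++ [(v, γ1)])
                = Submodule.span 𝔽 (insert v {w : 𝔽 → 𝔽 | w ∈ S.map Prod.fst}) := by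
              unfold spanS
              congr 1
              ext w
              simp [or_comm]
            rw [hins] at hxmem
            obtain ⟨cc, z, hz, hex⟩ := Submodule.mem_span_insert.1 hxmem
            have hcc : cc ≠ 0 := by
              intro h0
              rw [h0, zero_smul, zero_add] at hex
              exact hxnot (hex ▸ hz)
            have key : ∀ (γ : 𝔽) (f : 𝔽 → 𝔽), f ∈ sol (S ++ [(v, γ)]) →
                f x = cc * γ + ip z f := by
              intro γ f hf
              have h5 : ip (e x) f = ip (cc • v + z) f := by rw [← hex]
              rw [ip_e, ip_add_left, ip_smul_left, hipv γ f hf] at h5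
              exact h5
            have hz12 : ip z f1 = ip z f2 :=
              const_on_sol hz (hsolsub γ1 f1 hf1) (hsolsub γ2 f2 hf2)
            have hfin : cc * γ1 + ip z f1 = cc * γ2 + ip z f1 := by
              rw [← key γ1 f1 hf1, hz12, ← key γ2 f2 hf2, hy1, hy2]
            have : cc * γ1 = cc * γ2 := by
              have := add_right_cancel hfin
              exact this
            exact mul_left_cancel₀ hcc this
        have hfreshC : (∑ γ : 𝔽, cind (S ++ [(v, γ)]) y) + (XS S).card
            ≤ (XS (S ++ [(v, (0 : 𝔽))])).card := by
          have h6 := Finset.card_sdiff_of_subset hsub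
          have h7 := Finset.card_le_card hsub
          omega
        -- summing the induction hypotheses
        have hsum := Finset.sum_le_sum (fun γ (_ : γ ∈ (univ : Finset 𝔽)) => hIH γ)
        have hL : ∑ γ : 𝔽, (n * ((sol (S ++ [(v, γ)])).filter Sc).card
              + (sol (S ++ [(v, γ)])).card * (XS (S ++ [(v, γ)])).card)
            = n * ((sol S).filter Sc).card
              + (sol S).card * (XS (S ++ [(v, (0 : 𝔽))])).card := by
          rw [Finset.sum_add_distrib]
          congr 1
          · rw [← Finset.mul_sum, ← hpart]
          · rw [Finset.sum_congr rfl (fun γ _ => by rw [hXS' γ]), ← Finset.sum_mul, ← hpartA]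
        have hRHS : ∑ γ : 𝔽, (sol (S ++ [(v, γ)])).card
              * (n * cind (S ++ [(v, γ)]) y + 1 + (S ++ [(v, γ)]).length + t)
            ≤ (sol S).card * (∑ γ : 𝔽, cind (S ++ [(v, γ)]) y)
              + (sol S).card * (2 + S.length + t) := by
          have hstep : ∀ γ : 𝔽, (sol (S ++ [(v, γ)])).card
              * (n * cind (S ++ [(v, γ)]) y + 1 + (S ++ [(v, γ)]).length + t)
              = (sol S).card * cind (S ++ [(v, γ)]) y
                + (sol (S ++ [(v, γ)])).card * (2 + S.length + t) := by
            intro γ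
            have hlen : (S ++ [(v, γ)]).length = S.length + 1 := by simp
            rw [hlen, ← hcard γ]
            ring
          rw [Finset.sum_congr rfl (fun γ _ => hstep γ), Finset.sum_add_distrib,
            ← Finset.mul_sum, ← Finset.sum_mul, ← hpartA]
        rw [hc0]
        have h1 : n * ((sol S).filter Sc).card
            + (sol S).card * (XS (S ++ [(v, (0 : 𝔽))])).card
            ≤ (sol S).card * (∑ γ : 𝔽, cind (S ++ [(v, γ)]) y)
              + (sol S).card * (2 + S.length + t) := by
          rw [← hL]
          exact hsum.trans hRHS
        have h2 : (sol S).card * (∑ γ : 𝔽, cind (S ++ [(v, γ)]) y)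
            + (sol S).card * (XS S).card
            ≤ (sol S).card * (XS (S ++ [(v, (0 : 𝔽))])).card := by
          rw [← Nat.left_distrib]
          exact Nat.mul_le_mul_left _ hfreshC
        have hgoalval : (sol S).card * (n * 0 + 1 + S.length + (t + 1))
            = (sol S).card * (2 + S.length + t) := by ring
        rw [hgoalval]
        revert h1 h2
        generalize n * ((sol S).filter Sc).card = X
        generalize (sol S).card * (XS (S ++ [(v, (0 : 𝔽))])).card = P1
        generalize (sol S).card * (∑ γ : 𝔽, cind (S ++ [(v, γ)]) y) = P2
        generalize (sol S).card * (XS S).card = P3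
        generalize (sol S).card * (2 + S.length + t) = K
        intro h1 h2
        omega

end Tree

section Tree2

variable {n d : ℕ}

lemma fix_unique (α : Fin d → (Fin d → 𝔽) → (𝔽 → 𝔽))
    (hpre : ∀ (k : Fin d) (gs gs' : Fin d → 𝔽),
      (∀ j : Fin d, (j : ℕ) < (k : ℕ) → gs j = gs' j) → α k gs = α k gs')
    (f : 𝔽 → 𝔽) {g g' : Fin d → 𝔽}
    (hg : ∀ k, g k = ip (α k g) f) (hg' : ∀ k, g' k = ip (α k g') f) : g = g' := by
  have key : ∀ nn : ℕ, ∀ k : Fin d, (k : ℕ) ≤ nn → g k = g' k := by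
    intro nn
    induction nn with
    | zero =>
      intro k hk
      have hα : α k g = α k g' := hpre k g g' (fun j hj => absurd hj (by omega))
      rw [hg k, hg' k, hα]
    | succ nn ihn =>
      intro k hk
      have hα : α k g = α k g' := hpre k g g' (fun j hj => ihn j (by omega))
      rw [hg k, hg' k, hα]
  exact funext fun i => key (i : ℕ) i le_rfl

/-- the constraints revealed by a successful decoding of `y` along branch `γ` -/
def block (α : Fin d → (Fin d → 𝔽) → (𝔽 → 𝔽)) (oo : (Fin d → 𝔽) → 𝔽) (y : 𝔽)
    (γ : Fin d → 𝔽) : List ((𝔽 → 𝔽) × 𝔽) :=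
  (List.ofFn fun k => (α k γ, γ k)) ++ [(e (oo γ), y)]

lemma block_length (α : Fin d → (Fin d → 𝔽) → (𝔽 → 𝔽)) (oo : (Fin d → 𝔽) → 𝔽) (y : 𝔽)
    (γ : Fin d → 𝔽) : (block α oo y γ).length = d + 1 := by
  simp [block]

lemma mem_sol_append {S T : List ((𝔽 → 𝔽) × 𝔽)} {f : 𝔽 → 𝔽} :
    f ∈ sol (S ++ T) ↔ f ∈ sol S ∧ f ∈ sol T := by
  simp [mem_sol, List.mem_append, or_imp, forall_and]

lemma mem_sol_block {α : Fin d → (Fin d → 𝔽) → (𝔽 → 𝔽)} {oo : (Fin d → 𝔽) → 𝔽} {y : 𝔽}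
    {γ : Fin d → 𝔽} {f : 𝔽 → 𝔽} :
    f ∈ sol (block α oo y γ) ↔ (∀ k, ip (α k γ) f = γ k) ∧ f (oo γ) = y := by
  rw [mem_sol]
  constructor
  · intro h
    refine ⟨fun k => h (α k γ, γ k) ?_, ?_⟩
    · exact List.mem_append.2 (Or.inl (List.mem_ofFn.2 ⟨k, rfl⟩))
    · have := h (e (oo γ), y) (List.mem_append.2 (Or.inr (List.mem_singleton.2 rfl)))
      rwa [ip_e] at this
  · rintro ⟨h1, h2⟩ p hp
    rcases List.mem_append.1 hp with hp | hp
    · obtain ⟨k, hk⟩ := List.mem_ofFn.1 hp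
      rw [← hk]
      exact h1 k
    · rw [List.mem_singleton] at hp
      rw [hp]
      simpa [ip_e] using h2

lemma cell (y : 𝔽) (α : Fin d → (Fin d → 𝔽) → (𝔽 → 𝔽)) (oo : (Fin d → 𝔽) → 𝔽)
    (Sc : (𝔽 → 𝔽) → Prop) [DecidablePred Sc]
    (hpre : ∀ (k : Fin d) (gs gs' : Fin d → 𝔽),
      (∀ j : Fin d, (j : ℕ) < (k : ℕ) → gs j = gs' j) → α k gs = α k gs')
    (hfix : ∀ f : 𝔽 → 𝔽, ∃ g : Fin d → 𝔽,
      (∀ k, g k = ip (α k g) f) ∧ (Sc f ↔ f (oo g) = y))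
    (S : List ((𝔽 → 𝔽) × 𝔽)) (P : (𝔽 → 𝔽) → Prop) [DecidablePred P] :
    ∑ γ : Fin d → 𝔽, ((sol (S ++ block α oo y γ)).filter P).card
      = ((sol S).filter fun f => Sc f ∧ P f).card := by
  classical
  rw [Finset.card_eq_sum_card_fiberwise (f := fun f => (hfix f).choose)
    (t := (univ : Finset (Fin d → 𝔽))) (fun x _ => mem_univ _)]
  apply Finset.sum_congr rfl
  intro γ _
  congr 1
  ext f
  simp only [mem_filter, mem_sol_append, mem_sol_block]
  constructor
  · rintro ⟨⟨hfS, hfix', hfo⟩, hP⟩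
    have hγfix : ∀ k, γ k = ip (α k γ) f := fun k => (hfix' k).symm
    have hgv := (hfix f).choose_spec
    have hγgv : (hfix f).choose = γ := fix_unique α hpre f hgv.1 hγfix
    refine ⟨⟨hfS, ⟨hgv.2.mpr (by rw [hγgv]; exact hfo), hP⟩⟩, hγgv⟩
  · rintro ⟨⟨hfS, hSc, hP⟩, hγ⟩
    have hgv := (hfix f).choose_spec
    refine ⟨⟨hfS, fun k => ?_, ?_⟩, hP⟩
    · rw [← hγ]
      exact (hgv.1 k).symm
    · rw [← hγ]
      exact hgv.2.mp hSc

lemma cind_zero_or_one (S : List ((𝔽 → 𝔽) × 𝔽)) (y : 𝔽) :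
    cind S y = 0 ∨ cind S y = 1 := by
  simp only [cind]
  split <;> simp

lemma core_agg (hn : Fintype.card 𝔽 = n)
    (α : 𝔽 → Fin d → (Fin d → 𝔽) → (𝔽 → 𝔽)) (oo : 𝔽 → (Fin d → 𝔽) → 𝔽)
    (Sc : 𝔽 → (𝔽 → 𝔽) → Prop) [∀ y, DecidablePred (Sc y)]
    (hpre : ∀ (y : 𝔽) (k : Fin d) (gs gs' : Fin d → 𝔽),
      (∀ j : Fin d, (j : ℕ) < (k : ℕ) → gs j = gs' j) → α y k gs = α y k gs')
    (hfix : ∀ (y : 𝔽) (f : 𝔽 → 𝔽), ∃ g : Fin d → 𝔽,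
      (∀ k, g k = ip (α y k g) f) ∧ (Sc y f ↔ f (oo y g) = y))
    (S : List ((𝔽 → 𝔽) × 𝔽)) :
    ∑ y : 𝔽, ((sol S).filter (Sc y)).card ≤ (sol S).card * (1 + d + S.length) := by
  have hn1 : 0 < n := hn ▸ Fintype.card_pos
  rcases (sol S).eq_empty_or_nonempty with hA | ⟨f₀, hf₀⟩
  · simp [hA]
  have hmain : ∀ y : 𝔽, n * ((sol S).filter (Sc y)).card + (sol S).card * (XS S).card
      ≤ (sol S).card * (n * cind S y + 1 + S.length + d) := by
    intro y
    exact main_ind hn y (α y) (oo y) (Sc y) (hpre y) (hfix y) d 0 (by omega) S (fun _ => 0)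
      (fun f hf g hg i hi => absurd hi (by omega))
  have hsum := Finset.sum_le_sum (fun y (_ : y ∈ (univ : Finset 𝔽)) => hmain y)
  have hcind : ∑ y : 𝔽, cind S y ≤ (XS S).card := by
    have h1 : ∑ y : 𝔽, cind S y = (univ.filter fun y : 𝔽 => cind S y = 1).card := by
      rw [Finset.card_filter]
      apply Finset.sum_congr rfl
      intro y _
      rcases cind_zero_or_one S y with h | h
      · rw [h, if_neg (by omega)]
      · rw [h, if_pos rfl]
    rw [h1]
    have hwit' : ∀ y : 𝔽, ∃ x : 𝔽, cind S y = 1 → (x ∈ XS S ∧ f₀ x = y) := by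
      intro y
      by_cases h : cind S y = 1
      · simp only [cind] at h
        by_cases hex : ∃ x ∈ XS S, ∀ f ∈ sol S, f x = y
        · obtain ⟨x, hx1, hx2⟩ := hex
          exact ⟨x, fun _ => ⟨hx1, hx2 f₀ hf₀⟩⟩
        · rw [if_neg hex] at h
          omega
      · exact ⟨0, fun hcon => absurd hcon h⟩
    apply Finset.card_le_card_of_injOn (fun y => (hwit' y).choose)
    · intro y hy
      rw [mem_coe, mem_filter] at hy
      exact ((hwit' y).choose_spec hy.2).1
    · intro y1 h1 y2 h2 heq
      simp only [Finset.coe_filter, Set.mem_setOf_eq, mem_univ, true_and] at h1 h2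
      have heq' : (hwit' y1).choose = (hwit' y2).choose := heq
      have e1 := (hwit' y1).choose_spec h1
      have e2 := (hwit' y2).choose_spec h2
      rw [← e1.2, ← e2.2, heq']
  have hL : ∑ y : 𝔽, (n * ((sol S).filter (Sc y)).card + (sol S).card * (XS S).card)
      = n * (∑ y : 𝔽, ((sol S).filter (Sc y)).card)
        + n * ((sol S).card * (XS S).card) := by
    rw [Finset.sum_add_distrib, ← Finset.mul_sum, Finset.sum_const, card_univ, hn,
      smul_eq_mul]
  have hRr : ∑ y : 𝔽, (sol S).card * (n * cind S y + 1 + S.length + d)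
      = (sol S).card * n * (∑ y : 𝔽, cind S y)
        + n * ((sol S).card * (1 + S.length + d)) := by
    have hstep : ∀ y : 𝔽, (sol S).card * (n * cind S y + 1 + S.length + d)
        = (sol S).card * n * cind S y + (sol S).card * (1 + S.length + d) := by
      intro y
      ring
    rw [Finset.sum_congr rfl (fun y _ => hstep y), Finset.sum_add_distrib, ← Finset.mul_sum,
      Finset.sum_const, card_univ, hn, smul_eq_mul]
  have hmid : (sol S).card * n * (∑ y : 𝔽, cind S y) ≤ n * ((sol S).card * (XS S).card) := by
    calc (sol S).card * n * (∑ y : 𝔽, cind S y) ≤ (sol S).card * n * (XS S).card :=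
          Nat.mul_le_mul_left _ hcind
      _ = n * ((sol S).card * (XS S).card) := by ring
  rw [hL, hRr] at hsum
  have hfin : n * (∑ y : 𝔽, ((sol S).filter (Sc y)).card)
      ≤ n * ((sol S).card * (1 + S.length + d)) := by
    revert hsum hmid
    generalize n * (∑ y : 𝔽, ((sol S).filter (Sc y)).card) = X
    generalize (sol S).card * n * (∑ y : 𝔽, cind S y) = P1
    generalize n * ((sol S).card * (XS S).card) = P2
    generalize n * ((sol S).card * (1 + S.length + d)) = K
    intro hsum hmid
    omega
  have := Nat.le_of_mul_le_mul_left hfin hn1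
  exact this.trans_eq (by ring)

lemma gen (hn : Fintype.card 𝔽 = n)
    (α : 𝔽 → Fin d → (Fin d → 𝔽) → (𝔽 → 𝔽)) (oo : 𝔽 → (Fin d → 𝔽) → 𝔽)
    (Sc : 𝔽 → (𝔽 → 𝔽) → Prop) [∀ y, DecidablePred (Sc y)]
    (hpre : ∀ (y : 𝔽) (k : Fin d) (gs gs' : Fin d → 𝔽),
      (∀ j : Fin d, (j : ℕ) < (k : ℕ) → gs j = gs' j) → α y k gs = α y k gs')
    (hfix : ∀ (y : 𝔽) (f : 𝔽 → 𝔽), ∃ g : Fin d → 𝔽,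
      (∀ k, g k = ip (α y k g) f) ∧ (Sc y f ↔ f (oo y g) = y)) :
    ∀ (m : ℕ) (S : List ((𝔽 → 𝔽) × 𝔽)),
      ∑ ys : Fin m → 𝔽, ((sol S).filter fun f => ∀ i, Sc (ys i) f).card
        ≤ (sol S).card * ∏ j ∈ Finset.range m, (1 + d + S.length + (d + 1) * j) := by
  intro m
  induction m with
  | zero =>
    intro S
    rw [Finset.prod_range_zero, Nat.mul_one]
    have htriv : ∀ ys : Fin 0 → 𝔽, ((sol S).filter fun f => ∀ i, Sc (ys i) f) = sol S := by
      intro ys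
      apply Finset.filter_true_of_mem
      intro f _
      exact fun i => i.elim0
    rw [Finset.sum_congr rfl (fun ys _ => by rw [htriv ys]), Finset.sum_const, card_univ]
    simp
  | succ m ihm =>
    intro S
    have hsplit : ∑ ys : Fin (m + 1) → 𝔽, ((sol S).filter fun f => ∀ i, Sc (ys i) f).card
        = ∑ y : 𝔽, ∑ ys : Fin m → 𝔽,
            ((sol S).filter fun f => Sc y f ∧ ∀ i, Sc (ys i) f).card := by
      rw [← Equiv.sum_comp (Fin.consEquiv (fun _ : Fin (m + 1) => 𝔽))
        (fun ys : Fin (m + 1) → 𝔽 => ((sol S).filter fun f => ∀ i, Sc (ys i) f).card),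
        Fintype.sum_prod_type]
      apply Finset.sum_congr rfl
      intro y _
      apply Finset.sum_congr rfl
      intro ys _
      congr 1
      apply Finset.filter_congr
      intro f _
      rw [Fin.forall_fin_succ]
      simp [Fin.consEquiv]
    rw [hsplit]
    have hstep : ∀ y : 𝔽,
        ∑ ys : Fin m → 𝔽, ((sol S).filter fun f => Sc y f ∧ ∀ i, Sc (ys i) f).card
        ≤ ((sol S).filter (Sc y)).card
          * ∏ j ∈ Finset.range m, (1 + d + (S.length + (d + 1)) + (d + 1) * j) := by
      intro y
      have h1 : ∀ ys : Fin m → 𝔽,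
          ((sol S).filter fun f => Sc y f ∧ ∀ i, Sc (ys i) f).card
          = ∑ γ : Fin d → 𝔽,
            ((sol (S ++ block (α y) (oo y) y γ)).filter fun f => ∀ i, Sc (ys i) f).card :=
        fun ys => (cell y (α y) (oo y) (Sc y) (hpre y) (hfix y) S _).symm
      rw [Finset.sum_congr rfl (fun ys _ => h1 ys), Finset.sum_comm]
      have h2 : ∀ γ : Fin d → 𝔽,
          ∑ ys : Fin m → 𝔽,
            ((sol (S ++ block (α y) (oo y) y γ)).filter fun f => ∀ i, Sc (ys i) f).card
          ≤ (sol (S ++ block (α y) (oo y) y γ)).card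
            * ∏ j ∈ Finset.range m, (1 + d + (S.length + (d + 1)) + (d + 1) * j) := by
        intro γ
        have := ihm (S ++ block (α y) (oo y) y γ)
        rwa [List.length_append, block_length] at this
      calc ∑ γ : Fin d → 𝔽, ∑ ys : Fin m → 𝔽,
            ((sol (S ++ block (α y) (oo y) y γ)).filter fun f => ∀ i, Sc (ys i) f).card
          ≤ ∑ γ : Fin d → 𝔽, (sol (S ++ block (α y) (oo y) y γ)).card
            * ∏ j ∈ Finset.range m, (1 + d + (S.length + (d + 1)) + (d + 1) * j) :=
            Finset.sum_le_sum (fun γ _ => h2 γ)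
        _ = (∑ γ : Fin d → 𝔽, (sol (S ++ block (α y) (oo y) y γ)).card)
            * ∏ j ∈ Finset.range m, (1 + d + (S.length + (d + 1)) + (d + 1) * j) := by
            rw [Finset.sum_mul]
        _ = ((sol S).filter (Sc y)).card
            * ∏ j ∈ Finset.range m, (1 + d + (S.length + (d + 1)) + (d + 1) * j) := by
            congr 1
            have hc := cell y (α y) (oo y) (Sc y) (hpre y) (hfix y) S (fun _ => True)
            simpa using hc
    calc ∑ y : 𝔽, ∑ ys : Fin m → 𝔽,
          ((sol S).filter fun f => Sc y f ∧ ∀ i, Sc (ys i) f).card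
        ≤ ∑ y : 𝔽, ((sol S).filter (Sc y)).card
          * ∏ j ∈ Finset.range m, (1 + d + (S.length + (d + 1)) + (d + 1) * j) :=
          Finset.sum_le_sum (fun y _ => hstep y)
      _ = (∑ y : 𝔽, ((sol S).filter (Sc y)).card)
          * ∏ j ∈ Finset.range m, (1 + d + (S.length + (d + 1)) + (d + 1) * j) := by
          rw [Finset.sum_mul]
      _ ≤ ((sol S).card * (1 + d + S.length))
          * ∏ j ∈ Finset.range m, (1 + d + (S.length + (d + 1)) + (d + 1) * j) :=
          Nat.mul_le_mul_right _ (core_agg hn α oo Sc hpre hfix S)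
      _ = (sol S).card * ∏ j ∈ Finset.range (m + 1), (1 + d + S.length + (d + 1) * j) := by
          rw [Finset.prod_range_succ']
          have harg : ∀ j : ℕ, (1 + d + S.length + (d + 1) * (j + 1))
              = (1 + d + (S.length + (d + 1)) + (d + 1) * j) := by
            intro j
            ring
          rw [Finset.prod_congr rfl (fun j _ => harg j)]
          ring

end Tree2

section Advice

variable {n d : ℕ}

lemma advice_bound (hn : Fintype.card 𝔽 = n)
    (α : 𝔽 → Fin d → (Fin d → 𝔽) → (𝔽 → 𝔽)) (oo : 𝔽 → (Fin d → 𝔽) → 𝔽)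
    (Sc : 𝔽 → (𝔽 → 𝔽) → Prop) [∀ y, DecidablePred (Sc y)]
    (hpre : ∀ (y : 𝔽) (k : Fin d) (gs gs' : Fin d → 𝔽),
      (∀ j : Fin d, (j : ℕ) < (k : ℕ) → gs j = gs' j) → α y k gs = α y k gs')
    (hfix : ∀ (y : 𝔽) (f : 𝔽 → 𝔽), ∃ g : Fin d → 𝔽,
      (∀ k, g k = ip (α y k g) f) ∧ (Sc y f ↔ f (oo y g) = y))
    (m t : ℕ) :
    t ^ m * (univ.filter fun f : 𝔽 → 𝔽 => t ≤ (univ.filter fun y => Sc y f).card).card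
      ≤ n ^ n * ∏ j ∈ Finset.range m, ((d + 1) * (j + 1)) := by
  classical
  have hYm : ∀ f : 𝔽 → 𝔽, (univ.filter fun ys : Fin m → 𝔽 => ∀ i, Sc (ys i) f).card
      = (univ.filter fun y => Sc y f).card ^ m := by
    intro f
    have hpi : (univ.filter fun ys : Fin m → 𝔽 => ∀ i, Sc (ys i) f)
        = Fintype.piFinset (fun _ : Fin m => univ.filter fun y => Sc y f) := by
      ext ys
      simp [Fintype.mem_piFinset]
    rw [hpi, Fintype.card_piFinset]
    simp
  have h1 : t ^ m * (univ.filter fun f : 𝔽 → 𝔽 =>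
        t ≤ (univ.filter fun y => Sc y f).card).card
      ≤ ∑ f : 𝔽 → 𝔽, (univ.filter fun ys : Fin m → 𝔽 => ∀ i, Sc (ys i) f).card := by
    calc t ^ m * (univ.filter fun f : 𝔽 → 𝔽 =>
          t ≤ (univ.filter fun y => Sc y f).card).card
        = ∑ _f ∈ (univ.filter fun f : 𝔽 → 𝔽 =>
            t ≤ (univ.filter fun y => Sc y f).card), t ^ m := by
          rw [Finset.sum_const, smul_eq_mul, mul_comm]
      _ ≤ ∑ f ∈ (univ.filter fun f : 𝔽 → 𝔽 =>
            t ≤ (univ.filter fun y => Sc y f).card),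
            (univ.filter fun ys : Fin m → 𝔽 => ∀ i, Sc (ys i) f).card := by
          apply Finset.sum_le_sum
          intro f hf
          rw [hYm f]
          exact Nat.pow_le_pow_left (mem_filter.1 hf).2 m
      _ ≤ ∑ f : 𝔽 → 𝔽, (univ.filter fun ys : Fin m → 𝔽 => ∀ i, Sc (ys i) f).card :=
          Finset.sum_le_sum_of_subset (filter_subset _ _)
  have h2 : ∑ f : 𝔽 → 𝔽, (univ.filter fun ys : Fin m → 𝔽 => ∀ i, Sc (ys i) f).card
      = ∑ ys : Fin m → 𝔽, (univ.filter fun f : 𝔽 → 𝔽 => ∀ i, Sc (ys i) f).card := by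
    simp only [Finset.card_filter]
    exact Finset.sum_comm
  have hsolnil : (sol ([] : List ((𝔽 → 𝔽) × 𝔽))) = (univ : Finset (𝔽 → 𝔽)) := by
    ext f
    simp [mem_sol]
  have h3 := gen hn α oo Sc hpre hfix m ([] : List ((𝔽 → 𝔽) × 𝔽))
  rw [hsolnil] at h3
  simp only [List.length_nil] at h3
  have hcard : (univ : Finset (𝔽 → 𝔽)).card = n ^ n := by
    rw [card_univ, Fintype.card_fun, hn]
  have harg : ∀ j ∈ Finset.range m, (1 + d + 0 + (d + 1) * j) = (d + 1) * (j + 1) := by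
    intro j _
    ring
  calc t ^ m * (univ.filter fun f : 𝔽 → 𝔽 =>
        t ≤ (univ.filter fun y => Sc y f).card).card
      ≤ ∑ f : 𝔽 → 𝔽, (univ.filter fun ys : Fin m → 𝔽 => ∀ i, Sc (ys i) f).card := h1
    _ = ∑ ys : Fin m → 𝔽, (univ.filter fun f : 𝔽 → 𝔽 => ∀ i, Sc (ys i) f).card := h2
    _ ≤ n ^ n * ∏ j ∈ Finset.range m, ((d + 1) * (j + 1)) := by
        rw [← hcard, ← Finset.prod_congr rfl harg]
        exact h3

end Advice

lemma ncard_filter {β : Type} [Fintype β] (p : β → Prop) [DecidablePred p] :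
    Nat.card {x : β // p x} = (univ.filter p).card := by
  rw [Nat.card_eq_fintype_card, Fintype.card_subtype]

end Stmt13Aux

open Stmt13Aux Finset

/-- Let `𝔽` be a finite field with exactly `n` elements identified with
`[n]`, and `Inv = (P,Q,D)` an `s`-advice, `q`-query non-adaptive inverter with a `d`-depth
affine decision tree decoder (`1 ≤ q ≤ n/16`). Then for every `τ ∈ [0,1]`, `δ ∈ (0,1]` and
natural `m ≤ n log₂(n/q) / (4(d+1) log₂ n)`:
`Pr_f[Pr_x[Inv(f(x); f) ∈ f⁻¹(f(x))] ≥ τ]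
  ≤ α_{τ,δ} + 2^s δ^{-m}
      ∏_{j=1}^m ((d+1)j/n + max{(q/n)^{1/4}, 2(d+1)j log₂ n / (n log₂(n/q))})`,
where `α_{τ,δ} = Pr_f[∃ X ⊆ [n], |X| ≥ τn ∧ |f(X)| ≤ δn]`. -/
theorem stmt_13 {𝔽 : Type} [Field 𝔽] [Fintype 𝔽] [DecidableEq 𝔽]
    (n s q d : ℕ) (hn : Fintype.card 𝔽 = n) (hq1 : 1 ≤ q) (hqn : (q : ℝ) ≤ (n : ℝ) / 16)
    (P : (𝔽 → 𝔽) → (Fin s → Bool))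
    (Q : 𝔽 → (Fin s → Bool) → (Fin q → 𝔽))
    (D : 𝔽 → (Fin s → Bool) → (Fin q → 𝔽) → 𝔽)
    (htree : ∀ (y : 𝔽) (a : Fin s → Bool), ∃ (α : Fin d → (Fin d → 𝔽) → (𝔽 → 𝔽))
        (o : (Fin d → 𝔽) → 𝔽),
      (∀ (k : Fin d) (gs : Fin d → 𝔽) (x : 𝔽), α k gs x ≠ 0 → ∃ k' : Fin q, Q y a k' = x) ∧
      (∀ (k : Fin d) (gs gs' : Fin d → 𝔽),
        (∀ j : Fin d, (j : ℕ) < (k : ℕ) → gs j = gs' j) → α k gs = α k gs') ∧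
      (∀ f : 𝔽 → 𝔽, ∃ gvec : Fin d → 𝔽,
        (∀ k : Fin d, gvec k = ∑ x : 𝔽, α k gvec x * f x) ∧
        D y a (fun k => f (Q y a k)) = o gvec))
    (τ δ : ℝ) (hτ0 : 0 ≤ τ) (hτ1 : τ ≤ 1) (hδ0 : 0 < δ) (hδ1 : δ ≤ 1)
    (m : ℕ)
    (hm : (m : ℝ) ≤ (n : ℝ) * Real.logb 2 ((n : ℝ) / q)
        / (4 * ((d : ℝ) + 1) * Real.logb 2 n)) :
    (Nat.card {f : 𝔽 → 𝔽 //
        τ ≤ (Nat.card {x : 𝔽 //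
            f (D (f x) (P f) (fun k => f (Q (f x) (P f) k))) = f x} : ℝ) / n} : ℝ)
      / (Nat.card (𝔽 → 𝔽)) ≤
    (Nat.card {f : 𝔽 → 𝔽 // ∃ X : Finset 𝔽,
        τ * n ≤ (X.card : ℝ) ∧ ((X.image f).card : ℝ) ≤ δ * n} : ℝ)
      / (Nat.card (𝔽 → 𝔽))
    + (2 : ℝ) ^ s * (δ ^ m)⁻¹ *
      ∏ j ∈ Finset.Icc 1 m,
        (((d : ℝ) + 1) * (j : ℝ) / n
          + max (((q : ℝ) / n) ^ ((1 : ℝ) / 4))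
              (2 * ((d : ℝ) + 1) * (j : ℝ) * Real.logb 2 n
                / ((n : ℝ) * Real.logb 2 ((n : ℝ) / q)))) := by
  classical
  have hn1 : 0 < n := hn ▸ Fintype.card_pos
  -- success predicate, per advice
  -- tree data per advice
  have hdata : ∀ a : Fin s → Bool, ∃ (α : 𝔽 → Fin d → (Fin d → 𝔽) → (𝔽 → 𝔽))
      (oo : 𝔽 → (Fin d → 𝔽) → 𝔽),
      (∀ (y : 𝔽) (k : Fin d) (gs gs' : Fin d → 𝔽),
        (∀ j : Fin d, (j : ℕ) < (k : ℕ) → gs j = gs' j) → α y k gs = α y k gs') ∧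
      (∀ (y : 𝔽) (f : 𝔽 → 𝔽), ∃ g : Fin d → 𝔽,
        (∀ k, g k = ip (α y k g) f)
          ∧ ((f (D y a (fun k => f (Q y a k))) = y) ↔ f (oo y g) = y)) := by
    intro a
    choose αy ooy hprop using fun y => htree y a
    refine ⟨αy, ooy, fun y => (hprop y).2.1, ?_⟩
    intro y f
    obtain ⟨g, hg1, hg2⟩ := (hprop y).2.2 f
    refine ⟨g, fun k => hg1 k, ?_⟩
    rw [hg2]
  set tb : ℕ := ⌊δ * n⌋₊ with htb
  set Pnat : ℕ := ∏ j ∈ Finset.range m, ((d + 1) * (j + 1)) with hPnat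
  set Yf : (Fin s → Bool) → (𝔽 → 𝔽) → Finset 𝔽 := fun a f =>
    univ.filter fun y => f (D y a (fun k => f (Q y a k))) = y with hYf
  set bigF : (Fin s → Bool) → Finset (𝔽 → 𝔽) := fun a =>
    univ.filter fun f => tb + 1 ≤ (Yf a f).card with hbigF
  have hbig : ∀ a, (tb + 1) ^ m * (bigF a).card ≤ n ^ n * Pnat := by
    intro a
    obtain ⟨α, oo, hpre, hfix⟩ := hdata a
    exact advice_bound hn α oo (fun y f => f (D y a (fun k => f (Q y a k))) = y) hpre hfix m
      (tb + 1)
  set succF : (𝔽 → 𝔽) → Finset 𝔽 := fun f =>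
    univ.filter fun x => f (D (f x) (P f) (fun k => f (Q (f x) (P f) k))) = f x with hsuccF
  set LHSf : Finset (𝔽 → 𝔽) :=
    univ.filter fun f => τ ≤ ((succF f).card : ℝ) / n with hLHSf
  set alphaF : Finset (𝔽 → 𝔽) := univ.filter fun f => ∃ X : Finset 𝔽,
    τ * n ≤ (X.card : ℝ) ∧ ((X.image f).card : ℝ) ≤ δ * n with halphaF
  have hincl : LHSf ⊆ alphaF ∪ univ.biUnion (fun a : Fin s → Bool => bigF a) := by
    intro f hf
    rw [hLHSf, mem_filter] at hf
    by_cases hα : f ∈ alphaF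
    · exact mem_union_left _ hα
    · apply mem_union_right
      rw [mem_biUnion]
      refine ⟨P f, mem_univ _, ?_⟩
      have hna : ∀ X : Finset 𝔽, τ * n ≤ (X.card : ℝ) → δ * n < ((X.image f).card : ℝ) := by
        intro X hX
        by_contra hcon
        push_neg at hcon
        exact hα (by rw [halphaF, mem_filter]; exact ⟨mem_univ _, ⟨X, hX, hcon⟩⟩)
      have hSX : τ * n ≤ ((succF f).card : ℝ) := by
        have h0 : (0 : ℝ) < n := by exact_mod_cast hn1
        calc τ * n ≤ (((succF f).card : ℝ) / n) * n := by
              apply mul_le_mul_of_nonneg_right hf.2 (le_of_lt h0)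
          _ = ((succF f).card : ℝ) := by field_simp
      have h3 : δ * n < (((succF f).image f).card : ℝ) := hna _ hSX
      have h4 : (succF f).image f ⊆ Yf (P f) f := by
        intro y hy
        rw [mem_image] at hy
        obtain ⟨x, hx, rfl⟩ := hy
        rw [hsuccF, mem_filter] at hx
        rw [hYf, mem_filter]
        exact ⟨mem_univ _, hx.2⟩
      have h5 : δ * n < ((Yf (P f) f).card : ℝ) :=
        h3.trans_le (by exact_mod_cast card_le_card h4)
      have h6 : tb < (Yf (P f) f).card := by
        rw [htb]
        exact (Nat.floor_lt (by positivity)).2 h5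
      rw [hbigF, mem_filter]
      exact ⟨mem_univ _, h6⟩
  have hcount : LHSf.card ≤ alphaF.card + ∑ a : Fin s → Bool, (bigF a).card :=
    (card_le_card hincl).trans ((card_union_le _ _).trans
      (Nat.add_le_add_left (card_biUnion_le) _))
  -- real bound per advice
  have hδn : (0 : ℝ) < δ * n := by positivity
  have hbigR : ∀ a : Fin s → Bool, ((bigF a).card : ℝ) ≤ (n : ℝ) ^ n * Pnat / (δ * n) ^ m := by
    intro a
    have h1 : (0 : ℝ) < ((tb : ℝ) + 1) ^ m := by positivity
    have h2 : ((bigF a).card : ℝ) * ((tb : ℝ) + 1) ^ m ≤ (n : ℝ) ^ n * Pnat := by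
      have hcast := (Nat.cast_le (α := ℝ)).2 (hbig a)
      push_cast at hcast
      linarith
    have h3 : ((bigF a).card : ℝ) ≤ (n : ℝ) ^ n * Pnat / ((tb : ℝ) + 1) ^ m := by
      rw [le_div_iff₀ h1]
      exact h2
    have h4 : (δ * n) ^ m ≤ ((tb : ℝ) + 1) ^ m := by
      apply pow_le_pow_left₀ (le_of_lt hδn)
      exact le_of_lt (Nat.lt_floor_add_one (δ * n))
    exact h3.trans (div_le_div_of_nonneg_left (by positivity) (by positivity) h4)
  have htot : (LHSf.card : ℝ)
      ≤ (alphaF.card : ℝ) + 2 ^ s * ((n : ℝ) ^ n * Pnat / (δ * n) ^ m) := by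
    have hc : (LHSf.card : ℝ) ≤ (alphaF.card : ℝ) + ∑ a : Fin s → Bool, ((bigF a).card : ℝ) := by
      exact_mod_cast hcount
    refine hc.trans (add_le_add le_rfl ?_)
    calc ∑ a : Fin s → Bool, ((bigF a).card : ℝ)
        ≤ ∑ _a : Fin s → Bool, ((n : ℝ) ^ n * Pnat / (δ * n) ^ m) :=
          Finset.sum_le_sum (fun a _ => hbigR a)
      _ = 2 ^ s * ((n : ℝ) ^ n * Pnat / (δ * n) ^ m) := by
          rw [Finset.sum_const, card_univ, nsmul_eq_mul]
          congr 1
          rw [Fintype.card_fun]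
          push_cast
          simp
  -- the product bound
  set Prhs : ℝ := ∏ j ∈ Finset.Icc 1 m,
    (((d : ℝ) + 1) * (j : ℝ) / n
      + max (((q : ℝ) / n) ^ ((1 : ℝ) / 4))
          (2 * ((d : ℝ) + 1) * (j : ℝ) * Real.logb 2 n
            / ((n : ℝ) * Real.logb 2 ((n : ℝ) / q)))) with hPrhs
  have hprod : (Pnat : ℝ) / (n : ℝ) ^ m ≤ Prhs := by
    have hPn : (Pnat : ℝ) = ∏ j ∈ Finset.range m, (((d : ℝ) + 1) * ((j : ℝ) + 1)) := by
      rw [hPnat]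
      push_cast
      rfl
    have hnm : (n : ℝ) ^ m = ∏ _j ∈ Finset.range m, (n : ℝ) := by
      rw [Finset.prod_const, Finset.card_range]
    rw [hPn, hnm, ← Finset.prod_div_distrib]
    have hre : Prhs = ∏ i ∈ Finset.range m,
        (((d : ℝ) + 1) * ((1 + i : ℕ) : ℝ) / n
          + max (((q : ℝ) / n) ^ ((1 : ℝ) / 4))
              (2 * ((d : ℝ) + 1) * ((1 + i : ℕ) : ℝ) * Real.logb 2 n
                / ((n : ℝ) * Real.logb 2 ((n : ℝ) / q)))) := by
      rw [hPrhs, ← Finset.Ico_add_one_right_eq_Icc, Finset.prod_Ico_eq_prod_range]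
      simp
    rw [hre]
    apply Finset.prod_le_prod
    · intro j _
      positivity
    · intro j _
      have hmax : (0 : ℝ) ≤ max (((q : ℝ) / n) ^ ((1 : ℝ) / 4))
          (2 * ((d : ℝ) + 1) * ((1 + j : ℕ) : ℝ) * Real.logb 2 n
            / ((n : ℝ) * Real.logb 2 ((n : ℝ) / q))) :=
        le_max_of_le_left (Real.rpow_nonneg (by positivity) _)
      have heq : ((d : ℝ) + 1) * ((j : ℝ) + 1) / n
          = ((d : ℝ) + 1) * ((1 + j : ℕ) : ℝ) / n := by
        push_cast
        ring
      rw [heq]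
      linarith
  have hP : (n : ℝ) ^ n * Pnat / (δ * n) ^ m ≤ (n : ℝ) ^ n * ((δ ^ m)⁻¹ * Prhs) := by
    have hδm : (0 : ℝ) < δ ^ m := by positivity
    have hnn : (0 : ℝ) < (n : ℝ) ^ m := by positivity
    have hsplit : (n : ℝ) ^ n * Pnat / (δ * n) ^ m
        = (n : ℝ) ^ n * ((δ ^ m)⁻¹ * ((Pnat : ℝ) / (n : ℝ) ^ m)) := by
      rw [mul_pow]
      field_simp
    rw [hsplit]
    apply mul_le_mul_of_nonneg_left _ (by positivity)
    apply mul_le_mul_of_nonneg_left hprod (by positivity)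
  -- convert the goal
  have hNQ : (Nat.card (𝔽 → 𝔽) : ℝ) = (n : ℝ) ^ n := by
    rw [Nat.card_eq_fintype_card, Fintype.card_fun, hn]
    push_cast
    rfl
  have hLc : (Nat.card {f : 𝔽 → 𝔽 //
      τ ≤ (Nat.card {x : 𝔽 //
          f (D (f x) (P f) (fun k => f (Q (f x) (P f) k))) = f x} : ℝ) / n} : ℝ)
      = (LHSf.card : ℝ) := by
    congr 1
    rw [ncard_filter, hLHSf]
    apply congrArg
    apply Finset.filter_congr
    intro f _
    rw [ncard_filter, hsuccF]
  have hAc : (Nat.card {f : 𝔽 → 𝔽 // ∃ X : Finset 𝔽,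
      τ * n ≤ (X.card : ℝ) ∧ ((X.image f).card : ℝ) ≤ δ * n} : ℝ) = (alphaF.card : ℝ) := by
    congr 1
    rw [ncard_filter, halphaF]
  rw [hLc, hAc, hNQ]
  have hNpos : (0 : ℝ) < (n : ℝ) ^ n := by positivity
  have hfinal : (LHSf.card : ℝ)
      ≤ (alphaF.card : ℝ) + (n : ℝ) ^ n * ((2 : ℝ) ^ s * (δ ^ m)⁻¹ * Prhs) := by
    refine htot.trans (add_le_add le_rfl ?_)
    calc (2 : ℝ) ^ s * ((n : ℝ) ^ n * Pnat / (δ * n) ^ m)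
        ≤ (2 : ℝ) ^ s * ((n : ℝ) ^ n * ((δ ^ m)⁻¹ * Prhs)) :=
          mul_le_mul_of_nonneg_left hP (by positivity)
      _ = (n : ℝ) ^ n * ((2 : ℝ) ^ s * (δ ^ m)⁻¹ * Prhs) := by ring
  calc (LHSf.card : ℝ) / (n : ℝ) ^ n
      ≤ ((alphaF.card : ℝ) + (n : ℝ) ^ n * ((2 : ℝ) ^ s * (δ ^ m)⁻¹ * Prhs)) / (n : ℝ) ^ n :=
        (div_le_div_iff_of_pos_right hNpos).2 hfinal
    _ = (alphaF.card : ℝ) / (n : ℝ) ^ n + (2 : ℝ) ^ s * (δ ^ m)⁻¹ * Prhs := by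
        rw [add_div]
        congr 1
        exact mul_div_cancel_left₀ _ (ne_of_gt hNpos)
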